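/- Let p ∈ (1/2, 1), η > 0, d > 0 and u(w) = p·Φ((w+ηd)/√d) + (1−p)·Φ((−w+ηd)/√d). Then u is strictly concave in a neighborhood of its maximizer w* = (ln p − ln(1−p))/(2η); more precisely u''(w*) < 0. -/

import Mathlib

open MeasureTheory

/-- Standard normal cumulative distribution function. -/
noncomputable def stdNormalCDF (x : ℝ) : ℝ :=
  ∫ t in Set.Iic x, (Real.sqrt (2 * Real.pi))⁻¹ * Real.exp (-t ^ 2 / 2)

noncomputable def phi (x : ℝ) : ℝ := (Real.sqrt (2 * Real.pi))⁻¹ * Real.exp (-x ^ 2 / 2)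

lemma phi_cont : Continuous phi := by
  unfold phi; fun_prop

lemma phi_pos (x : ℝ) : 0 < phi x := by
  unfold phi
  positivity

lemma phi_hasDerivAt (x : ℝ) : HasDerivAt phi (-x * phi x) x := by
  have h1 : HasDerivAt (fun t : ℝ => -t ^ 2 / 2) (-x) x := by
    have := ((hasDerivAt_pow 2 x).neg).div_const 2
    refine this.congr_deriv ?_
    push_cast; ring
  have h2 := (h1.exp).const_mul (Real.sqrt (2 * Real.pi))⁻¹
  refine HasDerivAt.congr_deriv (f := phi) h2 ?_
  unfold phi; ring

lemma phi_integrable : Integrable phi := by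
  have h : Integrable (fun x : ℝ => Real.exp (-(1/2 : ℝ) * x ^ 2)) :=
    integrable_exp_neg_mul_sq (by norm_num)
  have := h.const_mul (Real.sqrt (2 * Real.pi))⁻¹
  convert this using 2 with x
  unfold phi
  ring_nf

lemma stdNormalCDF_hasDerivAt (x : ℝ) : HasDerivAt stdNormalCDF (phi x) x := by
  have heq : stdNormalCDF = fun y => stdNormalCDF 0 + ∫ t in (0:ℝ)..y, phi t := by
    funext y
    show (∫ t in Set.Iic y, phi t) = (∫ t in Set.Iic (0:ℝ), phi t) + ∫ t in (0:ℝ)..y, phi t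
    rw [← intervalIntegral.integral_Iic_sub_Iic phi_integrable.integrableOn
      phi_integrable.integrableOn]
    ring
  have h := intervalIntegral.integral_hasDerivAt_right
    (phi_integrable.intervalIntegrable)
    (phi_cont.stronglyMeasurableAtFilter _ _)
    (phi_cont.continuousAt) (a := 0) (b := x)
  rw [heq]
  exact (h.const_add (stdNormalCDF 0))

noncomputable def uD1 (p η d : ℝ) : ℝ → ℝ := fun w =>
  p * phi ((w + η * d) / Real.sqrt d) / Real.sqrt d
  - (1 - p) * phi ((-w + η * d) / Real.sqrt d) / Real.sqrt d

noncomputable def uD2 (p η d : ℝ) : ℝ → ℝ := fun w =>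
  -(p * ((w + η * d) / Real.sqrt d) * phi ((w + η * d) / Real.sqrt d)
    + (1 - p) * ((-w + η * d) / Real.sqrt d) * phi ((-w + η * d) / Real.sqrt d)) / d

lemma uFun_hasDerivAt (p η d : ℝ) (hd : 0 < d) (w : ℝ) :
    HasDerivAt (fun w => p * stdNormalCDF ((w + η * d) / Real.sqrt d) +
      (1 - p) * stdNormalCDF ((-w + η * d) / Real.sqrt d)) (uD1 p η d w) w := by
  have hA : HasDerivAt (fun w : ℝ => (w + η * d) / Real.sqrt d) (1 / Real.sqrt d) w :=
    ((hasDerivAt_id w).add_const (η * d)).div_const _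
  have hB : HasDerivAt (fun w : ℝ => (-w + η * d) / Real.sqrt d) (-1 / Real.sqrt d) w := by
    have := (((hasDerivAt_id w).neg).add_const (η * d)).div_const (Real.sqrt d)
    exact this
  have h1 := ((stdNormalCDF_hasDerivAt ((w + η * d) / Real.sqrt d)).comp w hA).const_mul p
  have h2 := ((stdNormalCDF_hasDerivAt ((-w + η * d) / Real.sqrt d)).comp w hB).const_mul (1 - p)
  have := h1.add h2
  refine this.congr_deriv ?_
  unfold uD1
  ring

lemma uD1_hasDerivAt (p η d : ℝ) (hd : 0 < d) (w : ℝ) :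
    HasDerivAt (uD1 p η d) (uD2 p η d w) w := by
  have hs : (0:ℝ) < Real.sqrt d := Real.sqrt_pos.mpr hd
  have hsq : Real.sqrt d * Real.sqrt d = d := Real.mul_self_sqrt hd.le
  have hA : HasDerivAt (fun w : ℝ => (w + η * d) / Real.sqrt d) (1 / Real.sqrt d) w :=
    ((hasDerivAt_id w).add_const (η * d)).div_const _
  have hB : HasDerivAt (fun w : ℝ => (-w + η * d) / Real.sqrt d) (-1 / Real.sqrt d) w := by
    have := (((hasDerivAt_id w).neg).add_const (η * d)).div_const (Real.sqrt d)
    exact this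
  have h1 := (((phi_hasDerivAt ((w + η * d) / Real.sqrt d)).comp w hA).const_mul p).div_const
    (Real.sqrt d)
  have h2 := (((phi_hasDerivAt ((-w + η * d) / Real.sqrt d)).comp w hB).const_mul
    (1 - p)).div_const (Real.sqrt d)
  have := h1.sub h2
  refine this.congr_deriv ?_
  unfold uD2
  field_simp
  ring_nf
  rw [Real.sq_sqrt hd.le]; ring

/-- The expected clean accuracy `u(w) = p·Φ((w+ηd)/√d) + (1−p)·Φ((−w+ηd)/√d)` is strictly
concave in a neighborhood of its maximizer `w* = (ln p − ln(1−p))/(2η)`; more precisely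
`u''(w*) < 0`. -/
theorem clean_accuracy_strictly_concave_at_max (p η d : ℝ)
    (hp : p ∈ Set.Ioo (1/2 : ℝ) 1) (hη : 0 < η) (hd : 0 < d) :
    (∃ r > 0, StrictConcaveOn ℝ
      (Set.Ioo ((Real.log p - Real.log (1 - p)) / (2 * η) - r)
        ((Real.log p - Real.log (1 - p)) / (2 * η) + r))
      (fun w => p * stdNormalCDF ((w + η * d) / Real.sqrt d) +
        (1 - p) * stdNormalCDF ((-w + η * d) / Real.sqrt d))) ∧
    deriv (deriv (fun w => p * stdNormalCDF ((w + η * d) / Real.sqrt d) +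
        (1 - p) * stdNormalCDF ((-w + η * d) / Real.sqrt d)))
      ((Real.log p - Real.log (1 - p)) / (2 * η)) < 0 := by
  obtain ⟨hp1, hp2⟩ := hp
  have hp0 : (0:ℝ) < p := lt_trans (by norm_num) hp1
  have hq0 : (0:ℝ) < 1 - p := by linarith
  have hs : (0:ℝ) < Real.sqrt d := Real.sqrt_pos.mpr hd
  have hsq : Real.sqrt d * Real.sqrt d = d := Real.mul_self_sqrt hd.le
  set L : ℝ := Real.log p - Real.log (1 - p) with hL
  set wstar : ℝ := L / (2 * η) with hws
  -- second derivative equals uD2 everywhere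
  have hderiv1 : deriv (fun w => p * stdNormalCDF ((w + η * d) / Real.sqrt d) +
      (1 - p) * stdNormalCDF ((-w + η * d) / Real.sqrt d)) = uD1 p η d := by
    funext w
    exact (uFun_hasDerivAt p η d hd w).deriv
  have hderiv2 : deriv (deriv (fun w => p * stdNormalCDF ((w + η * d) / Real.sqrt d) +
      (1 - p) * stdNormalCDF ((-w + η * d) / Real.sqrt d))) = uD2 p η d := by
    rw [hderiv1]
    funext w
    exact (uD1_hasDerivAt p η d hd w).deriv
  -- the key: uD2 at wstar is negative
  set a : ℝ := (wstar + η * d) / Real.sqrt d with ha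
  set b : ℝ := (-wstar + η * d) / Real.sqrt d with hb
  have habL : a ^ 2 - b ^ 2 = 2 * L := by
    rw [ha, hb, hws, div_pow, div_pow, div_sub_div_same, Real.sq_sqrt hd.le]
    field_simp
    ring
  have hkey : p * Real.exp (-a ^ 2 / 2) = (1 - p) * Real.exp (-b ^ 2 / 2) := by
    have h1 : (-a ^ 2 / 2 : ℝ) = -b ^ 2 / 2 + (Real.log (1 - p) - Real.log p) := by
      have := habL
      rw [hL] at this
      linarith
    rw [h1, Real.exp_add, Real.exp_sub, Real.exp_log hq0, Real.exp_log hp0]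
    field_simp
  have hab : a + b = 2 * η * Real.sqrt d := by
    rw [ha, hb, ← add_div, div_eq_iff hs.ne']
    nlinarith [hsq]
  have hneg : uD2 p η d wstar < 0 := by
    show -(p * a * phi a + (1 - p) * b * phi b) / d < 0
    have hphiab : p * a * phi a + (1 - p) * b * phi b
        = (1 - p) * phi b * (a + b) := by
      unfold phi
      have : p * Real.exp (-a ^ 2 / 2) * ((Real.sqrt (2 * Real.pi))⁻¹ * a)
          = (1 - p) * Real.exp (-b ^ 2 / 2) * ((Real.sqrt (2 * Real.pi))⁻¹ * a) := by
        rw [hkey]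
      nlinarith [this]
    rw [hphiab, hab]
    have : 0 < (1 - p) * phi b * (2 * η * Real.sqrt d) := by
      have := phi_pos b
      positivity
    rw [div_neg_iff]
    right
    exact ⟨by linarith, hd⟩
  constructor
  · -- strict concavity on a small interval
    have hcont : Continuous (uD2 p η d) := by
      have : Continuous (fun w : ℝ => (w + η * d) / Real.sqrt d) := by fun_prop
      have : Continuous (fun w : ℝ => (-w + η * d) / Real.sqrt d) := by fun_prop
      unfold uD2
      have := phi_cont
      fun_prop
    have hopen : IsOpen ((uD2 p η d) ⁻¹' Set.Iio 0) := (isOpen_Iio).preimage hcont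
    have hmem : wstar ∈ (uD2 p η d) ⁻¹' Set.Iio 0 := hneg
    obtain ⟨r, hr, hball⟩ := Metric.isOpen_iff.mp hopen wstar hmem
    refine ⟨r, hr, ?_⟩
    apply strictConcaveOn_of_deriv2_neg' (convex_Ioo _ _)
    · -- continuity of u on the interval
      have : Continuous (fun w => p * stdNormalCDF ((w + η * d) / Real.sqrt d) +
          (1 - p) * stdNormalCDF ((-w + η * d) / Real.sqrt d)) := by
        have hdiff : Differentiable ℝ (fun w => p * stdNormalCDF ((w + η * d) / Real.sqrt d) +
            (1 - p) * stdNormalCDF ((-w + η * d) / Real.sqrt d)) :=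
          fun w => (uFun_hasDerivAt p η d hd w).differentiableAt
        exact hdiff.continuous
      exact this.continuousOn
    · intro x hx
      have hxball : x ∈ Metric.ball wstar r := by
        rw [Real.ball_eq_Ioo]
        exact hx
      have := hball hxball
      simp only [Set.mem_preimage, Set.mem_Iio] at this
      simpa [Function.iterate_succ, Function.iterate_zero, Function.comp, hderiv2] using this
  · rw [hderiv2]
    exact hneg
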